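/- Let (X, d, μ) be a metric measure space, 1 < p < ∞, and let f ∈ L^1_loc(X) be non-negative and satisfy the reverse Hölder inequality (⨍_B f^p dμ)^{1/p} ≤ c ⨍_B f dμ for all balls B. Let ν(U) = ∫_U f dμ. Then for every ball B and every μ-measurable set E ⊂ B, one has ν(E)/ν(B) ≤ c' (μ(E)/μ(B))^{1/p'} whenever ν(B) > 0, where 1/p + 1/p' = 1 and c' depends only on c. -/

import Mathlib

open MeasureTheory Metric
open scoped NNReal ENNReal

/-- `f` satisfies the reverse Hölder inequality with exponent `p` and constant `c`. -/
def ReverseHolder {X : Type*} [MetricSpace X] [MeasurableSpace X]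
    (μ : Measure X) (p c : ℝ) (f : X → ℝ) : Prop :=
  ∀ (x : X) (r : ℝ), 0 < r →
    IntegrableOn (fun y => f y ^ p) (ball x r) μ ∧
    (⨍ y in ball x r, f y ^ p ∂μ) ^ (1 / p) ≤ c * ⨍ y in ball x r, f y ∂μ

/-- **Key absolute-continuity estimate.** If a non-negative `f ∈ L^1_loc` satisfies the
reverse Hölder inequality with exponent `1 < p < ∞` and constant `c`, and
`ν(U) = ∫_U f dμ`, then for every ball `B` and every μ-measurable `E ⊆ B` with `ν(B) > 0`,
`ν(E)/ν(B) ≤ c' (μ(E)/μ(B))^(1/p')`, where `1/p + 1/p' = 1` (so `1/p' = 1 − 1/p`) and `c'`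
depends only on `c`. -/
theorem nu_ratio_estimate {X : Type*} [MetricSpace X] [MeasurableSpace X] [BorelSpace X]
    (μ : Measure X)
    (hopen : ∀ U : Set X, IsOpen U → U.Nonempty → 0 < μ U)
    (hbdd : ∀ s : Set X, Bornology.IsBounded s → μ s < ⊤)
    (p c : ℝ) (hp : 1 < p) :
    ∃ c' : ℝ, 0 < c' ∧
      ∀ f : X → ℝ, (∀ x, 0 ≤ f x) →
        (∀ (x : X) (r : ℝ), 0 < r → IntegrableOn f (ball x r) μ) →
        ReverseHolder μ p c f →
        ∀ (x : X) (r : ℝ), 0 < r →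
          ∀ E : Set X, MeasurableSet E → E ⊆ ball x r →
            0 < ∫ y in ball x r, f y ∂μ →
            (∫ y in E, f y ∂μ) / (∫ y in ball x r, f y ∂μ) ≤
              c' * ((μ E).toReal / (μ (ball x r)).toReal) ^ (1 - 1 / p) := by
  have hp0 : (0:ℝ) < p := lt_trans one_pos hp
  refine ⟨max c 1, lt_of_lt_of_le one_pos (le_max_right _ _), ?_⟩
  intro f hf0 hfint hRH x r hr E hE hEB hνB
  set B := ball x r with hB
  set q : ℝ := Real.conjExponent p with hq
  have hpq : p.HolderConjugate q := Real.HolderConjugate.conjExponent hp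
  set e : ℝ := 1 - 1 / p with he
  have heq : e = 1 / q := by
    rw [he, one_div, one_div, hpq.one_sub_inv]
  have hq0 : 0 < q := hpq.symm.pos
  have he0 : 0 ≤ e := by
    rw [heq]; positivity
  have hμB_pos : 0 < μ B := hopen _ isOpen_ball (nonempty_ball.2 hr)
  have hμB_lt : μ B < ⊤ := hbdd _ isBounded_ball
  have hμE_lt : μ E < ⊤ := lt_of_le_of_lt (measure_mono hEB) hμB_lt
  have hM : 0 < (μ B).toReal := ENNReal.toReal_pos hμB_pos.ne' hμB_lt.ne
  set M : ℝ := (μ B).toReal with hMdef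
  set m : ℝ := (μ E).toReal with hmdef
  have hm0 : 0 ≤ m := ENNReal.toReal_nonneg
  obtain ⟨hfp_int, hRHB⟩ := hRH x r hr
  have hfB : IntegrableOn f B μ := hfint x r hr
  have hfE : IntegrableOn f E μ := hfB.mono_set hEB
  have hrE : μ.restrict E ≤ μ.restrict B := Measure.restrict_mono hEB le_rfl
  have hfmE : AEMeasurable f (μ.restrict E) := hfB.aemeasurable.mono_measure hrE
  set A : ℝ := ∫ y in B, f y ∂μ with hA
  set IE : ℝ := ∫ y in E, f y ∂μ with hIE
  -- Hölder inequality (in ℝ≥0∞)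
  have holder : ENNReal.ofReal IE ≤
      (∫⁻ y in E, ENNReal.ofReal (f y) ^ p ∂μ) ^ (1/p) * (μ E) ^ (1/q) := by
    have h := ENNReal.lintegral_mul_le_Lp_mul_Lq (μ.restrict E) hpq
      (hfmE.ennreal_ofReal) (aemeasurable_const (b := (1:ℝ≥0∞)))
    simp only [Pi.mul_apply, Pi.one_apply, mul_one, ENNReal.one_rpow, lintegral_one,
      Measure.restrict_apply_univ] at h
    rw [hIE, ofReal_integral_eq_lintegral_ofReal hfE
      (Filter.Eventually.of_forall fun y => hf0 y)]
    exact h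
  -- bound the p-energy on E by that on B
  have henergy : (∫⁻ y in E, ENNReal.ofReal (f y) ^ p ∂μ) ≤
      ENNReal.ofReal (∫ y in B, f y ^ p ∂μ) := by
    calc (∫⁻ y in E, ENNReal.ofReal (f y) ^ p ∂μ)
        ≤ ∫⁻ y in B, ENNReal.ofReal (f y) ^ p ∂μ := lintegral_mono' hrE le_rfl
      _ = ∫⁻ y in B, ENNReal.ofReal (f y ^ p) ∂μ := by
          refine lintegral_congr fun y => ?_
          rw [ENNReal.ofReal_rpow_of_nonneg (hf0 y) hp0.le]
      _ = ENNReal.ofReal (∫ y in B, f y ^ p ∂μ) := by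
          rw [ofReal_integral_eq_lintegral_ofReal hfp_int
            (Filter.Eventually.of_forall fun y => Real.rpow_nonneg (hf0 y) p)]
  set Ip : ℝ := ∫ y in B, f y ^ p ∂μ with hIp
  have hIp0 : 0 ≤ Ip :=
    setIntegral_nonneg measurableSet_ball fun y _ => Real.rpow_nonneg (hf0 y) p
  -- to real: IE ≤ Ip^(1/p) * m^(1/q)
  have hreal : IE ≤ Ip ^ (1/p) * m ^ (1/q) := by
    have hIE0 : 0 ≤ IE := setIntegral_nonneg hE fun y _ => hf0 y
    have h2 : ENNReal.ofReal IE ≤ ENNReal.ofReal Ip ^ (1/p) * (μ E) ^ (1/q) := by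
      refine holder.trans (mul_le_mul' ?_ le_rfl)
      exact ENNReal.rpow_le_rpow henergy (by positivity)
    have hfin : ENNReal.ofReal Ip ^ (1/p) * (μ E) ^ (1/q) ≠ ⊤ := by
      apply ENNReal.mul_ne_top
      · exact ENNReal.rpow_ne_top_of_nonneg (by positivity) ENNReal.ofReal_ne_top
      · exact ENNReal.rpow_ne_top_of_nonneg (by positivity) hμE_lt.ne

    have := ENNReal.toReal_le_toReal ENNReal.ofReal_ne_top hfin |>.2 h2
    rw [ENNReal.toReal_ofReal hIE0, ENNReal.toReal_mul, ← ENNReal.toReal_rpow,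
      ← ENNReal.toReal_rpow, ENNReal.toReal_ofReal hIp0] at this
    exact this
  -- averages
  have havg : (⨍ y in B, f y ∂μ) = M⁻¹ * A := by
    rw [setAverage_eq, hA, hMdef]; simp [smul_eq_mul, Measure.real]
  have havgp : (⨍ y in B, f y ^ p ∂μ) = M⁻¹ * Ip := by
    rw [setAverage_eq, hIp, hMdef]; simp [smul_eq_mul, Measure.real]
  have havgp0 : 0 ≤ M⁻¹ * Ip := by positivity
  have havg_pos : 0 < M⁻¹ * A := by positivity
  have hca_nonneg : 0 ≤ c * (M⁻¹ * A) := by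
    have h1 : (0:ℝ) ≤ (M⁻¹ * Ip) ^ (1/p) := Real.rpow_nonneg havgp0 _
    have := hRHB
    rw [havg, havgp] at this
    linarith
  have hc0 : 0 ≤ c := (mul_nonneg_iff_of_pos_right havg_pos).1 hca_nonneg
  -- Ip ≤ M * (c * (M⁻¹ * A))^p
  have hIp_le : Ip ≤ M * (c * (M⁻¹ * A)) ^ p := by
    have h1 : (M⁻¹ * Ip) ^ (1/p) ≤ c * (M⁻¹ * A) := by
      have := hRHB; rwa [havg, havgp] at this
    have h2 : ((M⁻¹ * Ip) ^ (1/p)) ^ p ≤ (c * (M⁻¹ * A)) ^ p :=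
      Real.rpow_le_rpow (Real.rpow_nonneg havgp0 _) h1 hp0.le
    rw [← Real.rpow_mul havgp0, one_div, inv_mul_cancel₀ hp0.ne', Real.rpow_one] at h2
    calc Ip = M * (M⁻¹ * Ip) := by field_simp
      _ ≤ M * (c * (M⁻¹ * A)) ^ p := mul_le_mul_of_nonneg_left h2 hM.le
  -- combine
  have hkey : IE ≤ c * A * (m ^ e / M ^ e) := by
    have h1 : Ip ^ (1/p) ≤ (M * (c * (M⁻¹ * A)) ^ p) ^ (1/p) :=
      Real.rpow_le_rpow hIp0 hIp_le (by positivity)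
    have h2 : (M * (c * (M⁻¹ * A)) ^ p) ^ (1/p) = M ^ (1/p) * (c * (M⁻¹ * A)) := by
      rw [Real.mul_rpow hM.le (Real.rpow_nonneg hca_nonneg p),
        ← Real.rpow_mul hca_nonneg, mul_one_div, div_self hp0.ne', Real.rpow_one]
    have h3 : IE ≤ M ^ (1/p) * (c * (M⁻¹ * A)) * m ^ (1/q) := by
      refine hreal.trans ?_
      exact mul_le_mul_of_nonneg_right (h1.trans_eq h2) (Real.rpow_nonneg hm0 _)
    have hMe : M ^ (1/p) * M⁻¹ = (M ^ e)⁻¹ := by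
      rw [← Real.rpow_neg_one M, ← Real.rpow_add hM, ← Real.rpow_neg hM.le]
      congr 1
      rw [he]; ring
    calc IE ≤ M ^ (1/p) * (c * (M⁻¹ * A)) * m ^ (1/q) := h3
      _ = c * A * ((M ^ (1/p) * M⁻¹) * m ^ (1/q)) := by ring
      _ = c * A * (m ^ e / M ^ e) := by
          rw [hMe, heq]; ring
  -- finish
  rw [div_le_iff₀ hνB]
  calc IE ≤ c * A * (m ^ e / M ^ e) := hkey
    _ ≤ max c 1 * A * (m ^ e / M ^ e) := by
        have : (0:ℝ) ≤ A * (m ^ e / M ^ e) := by positivity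
        have h := mul_le_mul_of_nonneg_right (le_max_left c 1) this
        calc c * A * (m ^ e / M ^ e) = c * (A * (m ^ e / M ^ e)) := by ring
          _ ≤ max c 1 * (A * (m ^ e / M ^ e)) := h
          _ = max c 1 * A * (m ^ e / M ^ e) := by ring
    _ = max c 1 * (m / M) ^ e * A := by
        rw [Real.div_rpow hm0 hM.le]; ring
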